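/- The Ishii vector field f(x,y,z) = (y, z, 12xy) is divergence-free, and the Jacobian determinant of its Kahan map equals 1: if (x',y',z') is given by the Kahan update (x'-x)/h = (y+y')/2, (y'-y)/h = (z+z')/2, (z'-z)/h = 6(xy'+x'y), then det(∂(x',y',z')/∂(x,y,z)) = 1 wherever the map is defined. -/

import Mathlib

open Matrix

set_option maxHeartbeats 2000000
set_option synthInstance.maxHeartbeats 400000

noncomputable section KahanIshiiAux

abbrev E3 := Fin 3 → ℝ

def Mm (p : E3) : Matrix (Fin 3) (Fin 3) ℝ :=
  !![0,1,0; 0,0,1; 12*p 1, 12*p 0, 0]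

def Nm (v : E3) : Matrix (Fin 3) (Fin 3) ℝ :=
  !![0,0,0; 0,0,0; 12*v 1, 12*v 0, 0]

def Am (h : ℝ) (p : E3) : Matrix (Fin 3) (Fin 3) ℝ := 1 - (h/2) • Mm p

def Dm (h : ℝ) (p : E3) : ℝ := 1 - 3*h^2*p 0 - 3/2*h^3*p 1

def Bm (h : ℝ) (p : E3) : Matrix (Fin 3) (Fin 3) ℝ :=
  (Dm h p)⁻¹ • !![1 - 3*h^2*p 0, h/2, h^2/4;
                  3*h^2*p 1, 1, h/2;
                  6*h*p 1, 6*h*p 0 + 3*h^2*p 1, 1]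

def toCLM (m : Matrix (Fin 3) (Fin 3) ℝ) : E3 →L[ℝ] E3 :=
  LinearMap.toContinuousLinearMap (Matrix.toLin' m)

@[simp] lemma toCLM_apply (m : Matrix (Fin 3) (Fin 3) ℝ) (v : E3) :
    toCLM m v = m.mulVec v := by
  simp [toCLM, Matrix.toLin'_apply]

lemma toCLM_mul (m n : Matrix (Fin 3) (Fin 3) ℝ) :
    toCLM (m * n) = toCLM m * toCLM n := by
  ext v : 1
  simp [ContinuousLinearMap.mul_apply, mulVec_mulVec]

lemma toCLM_one : toCLM (1 : Matrix (Fin 3) (Fin 3) ℝ) = 1 := by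
  ext v : 1
  simp [Matrix.one_mulVec]

lemma detAm (h : ℝ) (p : E3) : (Am h p).det = Dm h p := by
  simp [Am, Mm, Dm, det_fin_three]; ring

lemma hAB (h : ℝ) (p : E3) (hD : Dm h p ≠ 0) : Am h p * Bm h p = 1 := by
  have hD' := hD
  simp only [Dm] at hD'
  ext i j
  fin_cases i <;> fin_cases j <;>
  · simp [Am, Bm, Mm, Matrix.mul_apply, Fin.sum_univ_three, Matrix.one_fin_three,
      Matrix.vecHead, Matrix.vecTail]
    try field_simp
    try simp only [Dm]
    try ring

lemma hBA (h : ℝ) (p : E3) (hD : Dm h p ≠ 0) : Bm h p * Am h p = 1 := by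
  have hD' := hD
  simp only [Dm] at hD'
  ext i j
  fin_cases i <;> fin_cases j <;>
  · simp [Am, Bm, Mm, Matrix.mul_apply, Fin.sum_univ_three, Matrix.one_fin_three,
      Matrix.vecHead, Matrix.vecTail]
    try field_simp
    try simp only [Dm]
    try ring

lemma hasFDerivAt_ishii (f : E3 → E3) (hf : ∀ p, f p = ![p 1, p 2, 12 * p 0 * p 1])
    (p : E3) : HasFDerivAt f (toCLM (Mm p)) p := by
  have hfe : f = fun q => ![q 1, q 2, 12 * q 0 * q 1] := funext hf
  rw [hfe]
  apply hasFDerivAt_pi''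
  intro i
  fin_cases i
  · refine HasFDerivAt.congr_fderiv (hasFDerivAt_apply (𝕜 := ℝ) 1 p) ?_
    ext v; simp [Mm, Matrix.mulVec, dotProduct, Fin.sum_univ_three]
  · refine HasFDerivAt.congr_fderiv (hasFDerivAt_apply (𝕜 := ℝ) 2 p) ?_
    ext v; simp [Mm, Matrix.mulVec, dotProduct, Fin.sum_univ_three]
  · have h0 : HasFDerivAt (𝕜 := ℝ) (fun q : E3 => q 0) (ContinuousLinearMap.proj 0) p :=
      hasFDerivAt_apply 0 p
    have h1 : HasFDerivAt (𝕜 := ℝ) (fun q : E3 => q 1) (ContinuousLinearMap.proj 1) p :=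
      hasFDerivAt_apply 1 p
    have h2 := (h0.const_mul (12:ℝ)).mul h1
    refine HasFDerivAt.congr_fderiv h2 ?_
    ext v
    simp [Mm, Matrix.mulVec, dotProduct, Fin.sum_univ_three]
    ring

lemma Nm_add (v w : E3) : Nm (v + w) = Nm v + Nm w := by
  ext i j
  fin_cases i <;> fin_cases j <;>
    simp [Nm, Matrix.vecHead, Matrix.vecTail] <;> ring

lemma Nm_smul (c : ℝ) (v : E3) : Nm (c • v) = c • Nm v := by
  ext i j
  fin_cases i <;> fin_cases j <;>
    simp [Nm, Matrix.vecHead, Matrix.vecTail] <;> ring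

def Aderiv (h : ℝ) : E3 →L[ℝ] (E3 →L[ℝ] E3) :=
  LinearMap.toContinuousLinearMap
    { toFun := fun v => toCLM ((-(h/2)) • Nm v)
      map_add' := by
        intro v w
        ext u : 1
        simp [Nm_add, smul_add, Matrix.add_mulVec, add_smul]
      map_smul' := by
        intro c v
        ext u : 1
        show toCLM ((-(h/2)) • Nm (c • v)) u = ((RingHom.id ℝ c) • toCLM ((-(h/2)) • Nm v)) u
        rw [Nm_smul]
        simp only [RingHom.id_apply, ContinuousLinearMap.smul_apply, toCLM_apply,
          Matrix.smul_mulVec, smul_smul]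
        module }

@[simp] lemma Aderiv_apply (h : ℝ) (v : E3) :
    Aderiv h v = toCLM ((-(h/2)) • Nm v) := rfl

lemma hasFDerivAt_Am (h : ℝ) (p : E3) :
    HasFDerivAt (fun q => toCLM (Am h q)) (Aderiv h) p := by
  have key : (fun q => toCLM (Am h q))
      = fun q => toCLM (Am h 0) + Aderiv h q := by
    funext q
    ext v : 1
    funext i
    simp only [toCLM_apply, ContinuousLinearMap.add_apply, Aderiv_apply, Pi.add_apply]
    simp [Am, Mm, Nm, Matrix.sub_mulVec, Matrix.smul_mulVec, Matrix.mulVec,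
      dotProduct, Fin.sum_univ_three, Matrix.vecHead, Matrix.vecTail]
    fin_cases i <;> simp [Matrix.vecHead, Matrix.vecTail] <;> ring
  rw [key]
  exact ((Aderiv h).hasFDerivAt).const_add _

end KahanIshiiAux

/-- The Ishii vector field `f(x,y,z) = (y, z, 12xy)` is divergence-free,
and the Jacobian determinant of its Kahan map
`Φ(p) = p + h (I - (h/2) f'(p))⁻¹ f(p)` equals 1 wherever the map is defined. -/
theorem kahan_ishii_volume_preserving (h : ℝ) (hh : h ≠ 0)
    (f : (Fin 3 → ℝ) → (Fin 3 → ℝ))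
    (hf : ∀ p, f p = ![p 1, p 2, 12 * p 0 * p 1])
    (Φ : (Fin 3 → ℝ) → (Fin 3 → ℝ))
    (hΦ : ∀ p, Φ p = p + h • (Ring.inverse
      ((1 : (Fin 3 → ℝ) →L[ℝ] (Fin 3 → ℝ)) - (h/2) • fderiv ℝ f p)) (f p)) :
    (∀ p : Fin 3 → ℝ, ∑ i : Fin 3, fderiv ℝ f p (Pi.single i 1) i = 0) ∧
    (∀ p : Fin 3 → ℝ,
      IsUnit ((1 : (Fin 3 → ℝ) →L[ℝ] (Fin 3 → ℝ)) - (h/2) • fderiv ℝ f p) →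
      LinearMap.det ((fderiv ℝ Φ p : (Fin 3 → ℝ) →L[ℝ] (Fin 3 → ℝ)) :
        (Fin 3 → ℝ) →ₗ[ℝ] (Fin 3 → ℝ)) = 1) := by
  have hfd : ∀ q : E3, HasFDerivAt f (toCLM (Mm q)) q := hasFDerivAt_ishii f hf
  have hfder : ∀ q : E3, fderiv ℝ f q = toCLM (Mm q) := fun q => (hfd q).fderiv
  have hAeq : ∀ q : E3, (1 : E3 →L[ℝ] E3) - (h/2) • fderiv ℝ f q = toCLM (Am h q) := by
    intro q
    rw [hfder]
    ext v : 1
    simp [Am, Matrix.sub_mulVec, Matrix.smul_mulVec, Matrix.one_mulVec]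
  constructor
  · intro p
    rw [hfder]
    simp [Fin.sum_univ_three, Mm, Matrix.mulVec, dotProduct, Pi.single_apply,
      Matrix.vecHead, Matrix.vecTail]
  · intro p hU
    rw [hAeq] at hU
    have hD : Dm h p ≠ 0 := by
      have h1 : IsUnit ((ContinuousLinearMap.toLinearMapRingHom (toCLM (Am h p)) :
          E3 →ₗ[ℝ] E3)) := hU.map _
      have h2 : (ContinuousLinearMap.toLinearMapRingHom (toCLM (Am h p)) : E3 →ₗ[ℝ] E3)
          = Matrix.toLin' (Am h p) := rfl
      rw [h2] at h1
      have h3 : IsUnit (LinearMap.det (Matrix.toLin' (Am h p))) := h1.map LinearMap.det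
      rw [LinearMap.det_toLin', detAm] at h3
      exact h3.ne_zero
    have hABc : toCLM (Am h p) * toCLM (Bm h p) = 1 := by
      rw [← toCLM_mul, hAB h p hD, toCLM_one]
    have hBAc : toCLM (Bm h p) * toCLM (Am h p) = 1 := by
      rw [← toCLM_mul, hBA h p hD, toCLM_one]
    let U : (E3 →L[ℝ] E3)ˣ := ⟨toCLM (Am h p), toCLM (Bm h p), hABc, hBAc⟩
    have hΦeq : Φ = fun q => q + h • (Ring.inverse (toCLM (Am h q))) (f q) := by
      funext q; rw [hΦ q, hAeq q]
    have hinv0 : HasFDerivAt (Ring.inverse : (E3 →L[ℝ] E3) → (E3 →L[ℝ] E3))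
        (-ContinuousLinearMap.mulLeftRight ℝ _ (toCLM (Bm h p)) (toCLM (Bm h p)))
        (toCLM (Am h p)) := hasFDerivAt_ringInverse (𝕜 := ℝ) U
    have hinv : HasFDerivAt (fun q : E3 => Ring.inverse (toCLM (Am h q)))
        ((-ContinuousLinearMap.mulLeftRight ℝ _ (toCLM (Bm h p)) (toCLM (Bm h p))).comp
          (Aderiv h)) p :=
      by have := hinv0.comp p (hasFDerivAt_Am h p); exact this
    have happ := hinv.clm_apply (hfd p)
    have hΦd : HasFDerivAt Φ
        (ContinuousLinearMap.id ℝ E3 + h • ((Ring.inverse (toCLM (Am h p))).comp (toCLM (Mm p))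
          + ((-ContinuousLinearMap.mulLeftRight ℝ _ (toCLM (Bm h p))
              (toCLM (Bm h p))).comp (Aderiv h)).flip (f p))) p := by
      rw [hΦeq]
      exact (hasFDerivAt_id p).add (happ.const_smul h)
    have hRB : Ring.inverse (toCLM (Am h p)) = toCLM (Bm h p) := by
      have : toCLM (Am h p) = (U : E3 →L[ℝ] E3) := rfl
      rw [this, Ring.inverse_unit]
      rfl
    have key_sym : ∀ v u : E3, (Nm v) *ᵥ u = (Nm u) *ᵥ v := by
      intro v u
      funext i
      fin_cases i <;>
        simp [Nm, Matrix.mulVec, dotProduct, Fin.sum_univ_three,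
          Matrix.vecHead, Matrix.vecTail] <;> ring
    set w : E3 := (Bm h p) *ᵥ (f p) with hw
    have hJm : (ContinuousLinearMap.id ℝ E3 + h • ((toCLM (Bm h p)).comp (toCLM (Mm p))
          + ((-ContinuousLinearMap.mulLeftRight ℝ _ (toCLM (Bm h p))
              (toCLM (Bm h p))).comp (Aderiv h)).flip (f p)))
        = toCLM (Bm h p * (Am h p + h • Mm p + (h^2/2) • Nm w)) := by
      ext v : 1
      have hBAv : Bm h p *ᵥ (Am h p *ᵥ v) = v := by
        rw [Matrix.mulVec_mulVec, hBA h p hD, Matrix.one_mulVec]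
      simp only [ContinuousLinearMap.add_apply, ContinuousLinearMap.coe_id', id_eq,
        ContinuousLinearMap.smul_apply, ContinuousLinearMap.comp_apply,
        ContinuousLinearMap.flip_apply, ContinuousLinearMap.neg_apply,
        ContinuousLinearMap.mulLeftRight_apply, ContinuousLinearMap.mul_apply,
        Aderiv_apply, toCLM_apply]
      rw [← Matrix.mulVec_mulVec, Matrix.add_mulVec, Matrix.add_mulVec,
        Matrix.smul_mulVec, Matrix.smul_mulVec, Matrix.smul_mulVec,
        key_sym w v]
      simp only [Matrix.mulVec_add, Matrix.mulVec_smul]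
      rw [hBAv]
      module
    have toCLM_coe : ∀ m : Matrix (Fin 3) (Fin 3) ℝ,
        ((toCLM m : E3 →L[ℝ] E3) : E3 →ₗ[ℝ] E3) = Matrix.toLin' m := fun m =>
      LinearMap.coe_toContinuousLinearMap _
    rw [hΦd.fderiv, hRB, hJm]
    rw [toCLM_coe, LinearMap.det_toLin', Matrix.det_mul]
    have hdetB : (Bm h p).det = (Dm h p)⁻¹ := by
      have hD' := hD
      simp only [Dm] at hD'
      simp [Bm, det_fin_three]
      field_simp
      simp only [Dm]
      ring
    have hdetS : (Am h p + h • Mm p + (h^2/2) • Nm w).det = Dm h p := by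
      have hD' := hD
      simp only [Dm] at hD'
      simp [Am, Mm, Nm, det_fin_three, hw, Bm, hf p, Matrix.mulVec, dotProduct,
        Fin.sum_univ_three, Matrix.vecHead, Matrix.vecTail]
      field_simp
      simp only [Dm]
      ring
    rw [hdetB, hdetS]
    field_simp
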